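/- Let G be a topological group, Γ ≤ G a subgroup, and let N, A, U be subgroups of G where A = {a_t : t∈ℝ} is a one-parameter subgroup normalizing N, such that a_{−t} u a_t → e as t → +∞ uniformly for u in compact subsets of U. Suppose x = gΓ and y = g'Γ in G/Γ, and there are sequences t_j → +∞, n_j → n₀ in N, ℓ_j → ℓ₀ in A, u_j → u₀ in U with a_{t_j} g = n_j ℓ_j u_j a_{t_j} g' γ_j for some γ_j ∈ Γ. Then ℓ₀ y lies in the closure of N·x in G/Γ; in particular ℓ₀ ∈ {ℓ ∈ A : ℓ·y ∈ closure(N·x)}. -/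

import Mathlib

open Filter

/-- Bruhat-decomposition sliding argument. Let `G` be a topological
group, `Γ ≤ G`, `N, U ≤ G` subgroups, and `a : ℝ → G` a one-parameter subgroup
normalizing `N`, with `a (−t) u (a t) → e` as `t → +∞` uniformly on compact subsets
of `U`. If `t_j → +∞`, `n_j → n₀` in `N`, `ℓ_j → ℓ₀` in `A`, `u_j → u₀` in `U` and
`a_{t_j} g = n_j ℓ_j u_j a_{t_j} g' γ_j` with `γ_j ∈ Γ`, then
`ℓ₀ • (g'Γ) ∈ closure (N • (gΓ))`. -/
theorem stmt14 {G : Type*} [Group G] [TopologicalSpace G] [IsTopologicalGroup G]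
    (Γ N U : Subgroup G) (a : ℝ → G)
    (ha0 : a 0 = 1) (haadd : ∀ s t : ℝ, a (s + t) = a s * a t)
    (hnorm : ∀ t : ℝ, ∀ n ∈ N, a t * n * (a t)⁻¹ ∈ N)
    (hcontract : ∀ V ∈ nhds (1 : G), ∀ K : Set G, K ⊆ (U : Set G) → IsCompact K →
      ∃ T : ℝ, ∀ t ≥ T, ∀ u ∈ K, a (-t) * u * a t ∈ V)
    (g g' : G) (tj : ℕ → ℝ) (htj : Tendsto tj atTop atTop)
    (nj : ℕ → G) (n₀ : G) (hnjN : ∀ j, nj j ∈ N) (hn₀ : n₀ ∈ N)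
    (hnj : Tendsto nj atTop (nhds n₀))
    (ℓj : ℕ → G) (ℓ₀ : G) (hℓjA : ∀ j, ℓj j ∈ Set.range a) (hℓ₀ : ℓ₀ ∈ Set.range a)
    (hℓj : Tendsto ℓj atTop (nhds ℓ₀))
    (uj : ℕ → G) (u₀ : G) (hujU : ∀ j, uj j ∈ U) (hu₀ : u₀ ∈ U)
    (huj : Tendsto uj atTop (nhds u₀))
    (γj : ℕ → G) (hγj : ∀ j, γj j ∈ Γ)
    (heq : ∀ j, a (tj j) * g = nj j * ℓj j * uj j * (a (tj j) * g' * γj j)) :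
    ℓ₀ • (QuotientGroup.mk g' : G ⧸ Γ) ∈
      closure ((fun n : G => n • (QuotientGroup.mk g : G ⧸ Γ)) '' (N : Set G)) := by

  have hainv : ∀ t : ℝ, (a t)⁻¹ = a (-t) := by
    intro t
    rw [inv_eq_iff_mul_eq_one, ← haadd]
    simp [ha0]
  have hcomm : ∀ t s : ℝ, a t * a s = a s * a t := by
    intro t s; rw [← haadd, add_comm, haadd]
  set ε : ℕ → G := fun j => a (-(tj j)) * uj j * a (tj j) with hεdef
  -- ε j → 1
  have hεtend : Tendsto ε atTop (nhds (1 : G)) := by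
    rw [Filter.tendsto_def]
    intro V hV
    have hK : IsCompact (insert u₀ (Set.range uj)) := huj.isCompact_insert_range
    obtain ⟨T, hT⟩ := hcontract V hV (insert u₀ (Set.range uj))
      (by rintro x (rfl | ⟨j, rfl⟩); exacts [hu₀, hujU j]) hK
    filter_upwards [htj.eventually_ge_atTop T] with j hj
    exact hT _ hj _ (Set.mem_insert_iff.mpr (Or.inr ⟨j, rfl⟩))
  -- key algebraic identity
  have key : ∀ j, a (-(tj j)) * nj j * a (tj j) * (ℓj j * ε j * g' * γj j) = g := by
    intro j
    obtain ⟨s, hs⟩ := hℓjA j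
    have hdℓ' : ∀ x : G, a (tj j) * (ℓj j * x) = ℓj j * (a (tj j) * x) := by
      intro x; rw [← mul_assoc, ← hs, hcomm, mul_assoc]
    have hdc' : ∀ x : G, a (tj j) * (a (-(tj j)) * x) = x := by
      intro x; rw [← mul_assoc, ← haadd]; simp [ha0]
    have hcd' : ∀ x : G, a (-(tj j)) * (a (tj j) * x) = x := by
      intro x; rw [← mul_assoc, ← haadd]; simp [ha0]
    have h2 := heq j
    simp only [hεdef]
    simp only [mul_assoc] at h2 ⊢
    rw [hdℓ', hdc', ← h2, hcd']
  -- the points lie in the N-orbit of gΓ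
  have hmem : ∀ j, (QuotientGroup.mk (ℓj j * ε j * g') : G ⧸ Γ) ∈
      ((fun n : G => n • (QuotientGroup.mk g : G ⧸ Γ)) '' (N : Set G)) := by
    intro j
    refine ⟨(a (-(tj j)) * nj j * a (tj j))⁻¹, ?_, ?_⟩
    · apply Subgroup.inv_mem
      have := hnorm (-(tj j)) (nj j) (hnjN j)
      rwa [hainv, neg_neg] at this
    · show QuotientGroup.mk ((a (-(tj j)) * nj j * a (tj j))⁻¹ * g) =
        (QuotientGroup.mk (ℓj j * ε j * g') : G ⧸ Γ)
      have h3 : (a (-(tj j)) * nj j * a (tj j))⁻¹ * g = ℓj j * ε j * g' * γj j := by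
        rw [inv_mul_eq_iff_eq_mul, key j]
      rw [h3, QuotientGroup.mk_mul_of_mem _ (hγj j)]
  -- convergence
  have htend : Tendsto (fun j => ℓj j * ε j * g') atTop (nhds (ℓ₀ * g')) := by
    have := (hℓj.mul hεtend).mul (tendsto_const_nhds (x := g'))
    simpa using this
  have hq : Tendsto (fun j => (QuotientGroup.mk (ℓj j * ε j * g') : G ⧸ Γ)) atTop
      (nhds (QuotientGroup.mk (ℓ₀ * g'))) :=
    (QuotientGroup.continuous_mk.tendsto _).comp htend
  have hsmul : ℓ₀ • (QuotientGroup.mk g' : G ⧸ Γ) = QuotientGroup.mk (ℓ₀ * g') := rfl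
  rw [hsmul]
  exact mem_closure_of_tendsto hq (Filter.Eventually.of_forall hmem)
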